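/- Let 𝒜 be a unital Banach algebra, q ∈ ℕ, and let I ⊆ 𝒜 be a two-sided ideal such that every product of q + 1 elements of I vanishes. Let ω : ℝ → I be continuous. For s ≥ 0 define A(s) = 1 + Σ_{k=1}^{q} (−1)^k ∫_{sΔ_k} ω(t_k)ω(t_{k−1})⋯ω(t_1) dt_1⋯dt_k, where sΔ_k = {(t_1,…,t_k) : 0 ≤ t_1 ≤ t_2 ≤ ⋯ ≤ t_k ≤ s}. Then: (i) A(0) = 1; (ii) A is differentiable on [0,∞) with A′(s) = −ω(s)·A(s) for every s ≥ 0; (iii) for every s ≥ 0 the element A(s) is invertible in 𝒜. -/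

import Mathlib

/-!
The truncated time-ordered (Volterra) series
`A(s) = 1 + ∑_{k=1}^{q} (-1)^k ∫_{sΔₖ} ω(t_k)⋯ω(t_1) dt₁⋯dt_k`
for a continuous `ω` with values in a two-sided ideal `I` of a unital Banach algebra such
that every product of `q+1` elements of `I` vanishes, satisfies `A(0) = 1`,
`A'(s) = -ω(s)·A(s)` on `[0, ∞)`, and `A(s)` is invertible for all `s ≥ 0`.
-/

open MeasureTheory

/-- The rescaled simplex `sΔₖ = {(t₁, …, t_k) : 0 ≤ t₁ ≤ t₂ ≤ ⋯ ≤ t_k ≤ s}`. -/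
def simplex (k : ℕ) (s : ℝ) : Set (Fin k → ℝ) :=
  {t | (∀ i j : Fin k, i ≤ j → t i ≤ t j) ∧ (∀ i, 0 ≤ t i) ∧ ∀ i, t i ≤ s}

/-- The truncated Volterra series
`A(s) = 1 + ∑_{k=1}^{q} (-1)^k ∫_{sΔₖ} ω(t_k)ω(t_{k-1})⋯ω(t₁) dt₁⋯dt_k`. -/
noncomputable def volterra {𝒜 : Type*} [NormedRing 𝒜] [NormedAlgebra ℝ 𝒜] [CompleteSpace 𝒜]
    (q : ℕ) (ω : ℝ → 𝒜) (s : ℝ) : 𝒜 :=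
  1 + ∑ k ∈ Finset.Icc 1 q, (-1 : ℝ) ^ k •
      ∫ t in simplex k s, (List.ofFn fun i : Fin k => ω (t i)).reverse.prod


set_option linter.unusedSectionVars false
set_option linter.unusedVariables false
set_option maxHeartbeats 1000000

namespace VolterraAux

variable {𝒜 : Type*} [NormedRing 𝒜] [NormedAlgebra ℝ 𝒜] [CompleteSpace 𝒜]


noncomputable def P (ω : ℝ → 𝒜) (k : ℕ) (t : Fin k → ℝ) : 𝒜 :=
  (List.ofFn fun i : Fin k => ω (t i)).reverse.prod

lemma isClosed_simplex (k : ℕ) (s : ℝ) : IsClosed (simplex k s) := by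
  have h1 : IsClosed {t : Fin k → ℝ | ∀ i j : Fin k, i ≤ j → t i ≤ t j} := by
    have : {t : Fin k → ℝ | ∀ i j : Fin k, i ≤ j → t i ≤ t j}
        = ⋂ (i : Fin k) (j : Fin k) (_ : i ≤ j), {t : Fin k → ℝ | t i ≤ t j} := by
      ext t; simp [Set.mem_iInter]
    rw [this]
    exact isClosed_iInter fun i => isClosed_iInter fun j => isClosed_iInter fun _ =>
      isClosed_le (continuous_apply i) (continuous_apply j)
  have h2 : IsClosed {t : Fin k → ℝ | ∀ i, 0 ≤ t i} := by
    have : {t : Fin k → ℝ | ∀ i, 0 ≤ t i} = ⋂ (i : Fin k), {t : Fin k → ℝ | 0 ≤ t i} := by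
      ext t; simp [Set.mem_iInter]
    rw [this]
    exact isClosed_iInter fun i => isClosed_le continuous_const (continuous_apply i)
  have h3 : IsClosed {t : Fin k → ℝ | ∀ i, t i ≤ s} := by
    have : {t : Fin k → ℝ | ∀ i, t i ≤ s} = ⋂ (i : Fin k), {t : Fin k → ℝ | t i ≤ s} := by
      ext t; simp [Set.mem_iInter]
    rw [this]
    exact isClosed_iInter fun i => isClosed_le (continuous_apply i) continuous_const
  exact (h1.inter (h2.inter h3))

lemma isCompact_simplex (k : ℕ) (s : ℝ) : IsCompact (simplex k s) := by
  refine (isCompact_Icc (a := fun _ : Fin k => (0:ℝ)) (b := fun _ => s)).of_isClosed_subset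
    (isClosed_simplex k s) ?_
  rintro t ⟨_, h2, h3⟩
  exact ⟨fun i => h2 i, fun i => h3 i⟩

variable {ω : ℝ → 𝒜}

lemma continuous_P (hω : Continuous ω) (k : ℕ) : Continuous (P ω k) := by
  have : P ω k = fun t => (((List.finRange k).reverse).map fun i => ω (t i)).prod := by
    funext t
    simp [P, List.ofFn_eq_map, List.map_reverse]
  rw [this]
  exact continuous_list_prod _ fun i _ => hω.comp (continuous_apply i)

lemma integrableOn_P (hω : Continuous ω) (k : ℕ) (s : ℝ) :
    IntegrableOn (P ω k) (simplex k s) :=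
  (continuous_P hω k).continuousOn.integrableOn_compact (isCompact_simplex k s)

noncomputable def volt (ω : ℝ → 𝒜) : ℕ → ℝ → 𝒜
  | 0 => fun _ => 1
  | (k+1) => fun s => ∫ u in (0:ℝ)..s, ω u * volt ω k u

lemma volt_zero : volt ω 0 = fun _ => (1 : 𝒜) := rfl

lemma volt_succ (k : ℕ) : volt ω (k+1) = fun s => ∫ u in (0:ℝ)..s, ω u * volt ω k u := rfl

lemma continuous_volt (hω : Continuous ω) : ∀ k, Continuous (volt ω k)
  | 0 => continuous_const
  | (k+1) => by
    have h := continuous_volt hω k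
    exact intervalIntegral.continuous_primitive (fun a b => (hω.mul h).intervalIntegrable a b) 0

lemma volt_hasDerivAt (hω : Continuous ω) (k : ℕ) (s : ℝ) :
    HasDerivAt (volt ω (k+1)) (ω s * volt ω k s) s := by
  have hc : Continuous fun u => ω u * volt ω k u := hω.mul (continuous_volt hω k)
  rw [volt_succ]
  exact intervalIntegral.integral_hasDerivAt_right (hc.intervalIntegrable 0 s)
    hc.aestronglyMeasurable.stronglyMeasurableAtFilter hc.continuousAt


lemma snoc_mem_simplex_iff {k : ℕ} {s u : ℝ} {y : Fin k → ℝ} :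
    Fin.snoc y u ∈ simplex (k+1) s ↔ (u ∈ Set.Icc 0 s ∧ y ∈ simplex k u) := by
  constructor
  · rintro ⟨h1, h2, h3⟩
    refine ⟨⟨by simpa using h2 (Fin.last k), by simpa using h3 (Fin.last k)⟩, ?_, ?_, ?_⟩
    · intro i j hij
      have := h1 i.castSucc j.castSucc (Fin.castSucc_le_castSucc_iff.2 hij)
      simpa using this
    · intro i; simpa using h2 i.castSucc
    · intro i
      have := h1 i.castSucc (Fin.last k) (Fin.le_last _)
      simpa using this
  · rintro ⟨⟨hu0, hus⟩, hy1, hy2, hy3⟩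
    refine ⟨?_, ?_, ?_⟩
    · intro i j hij
      induction j using Fin.lastCases with
      | last =>
        induction i using Fin.lastCases with
        | last => simp
        | cast i => simpa using hy3 i
      | cast j =>
        induction i using Fin.lastCases with
        | last => exact absurd hij (Fin.castSucc_lt_last j).not_ge
        | cast i => simpa using hy1 i j (Fin.castSucc_le_castSucc_iff.1 hij)
    · intro i
      induction i using Fin.lastCases with
      | last => simpa using hu0
      | cast i => simpa using hy2 i
    · intro i
      induction i using Fin.lastCases with
      | last => simpa using hus
      | cast i => simpa using (hy3 i).trans hus

lemma P_snoc {k : ℕ} (u : ℝ) (y : Fin k → ℝ) :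
    P ω (k+1) (Fin.snoc y u) = ω u * P ω k y := by
  simp only [P, List.ofFn_succ']
  simp [List.concat_eq_append, List.reverse_append, Fin.snoc_castSucc, Fin.snoc_last]

lemma F_succ (hω : Continuous ω) (k : ℕ) {s : ℝ} (hs : 0 ≤ s) :
    (∫ t in simplex (k+1) s, P ω (k+1) t)
      = ∫ u in Set.Icc (0:ℝ) s, ω u * ∫ y in simplex k u, P ω k y := by
  have hmeas : MeasurableSet (simplex (k+1) s) := (isClosed_simplex _ _).measurableSet
  have hint : IntegrableOn (P ω (k+1)) (simplex (k+1) s) := integrableOn_P hω _ _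
  set e : (Fin (k+1) → ℝ) ≃ᵐ ℝ × (Fin k → ℝ) :=
    MeasurableEquiv.piFinSuccAbove (fun _ => ℝ) (Fin.last k) with he
  have hsnoc : ∀ (u : ℝ) (y : Fin k → ℝ), e.symm (u, y) = Fin.snoc y u := by
    intro u y
    simp [he, MeasurableEquiv.piFinSuccAbove, Fin.insertNthEquiv, Fin.insertNth_last']
  have mp : MeasurePreserving e volume volume :=
    volume_preserving_piFinSuccAbove (fun _ : Fin (k+1) => ℝ) (Fin.last k)
  set f : ℝ × (Fin k → ℝ) → 𝒜 := fun x => (simplex (k+1) s).indicator (P ω (k+1)) (e.symm x)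
    with hf
  have step1 : (∫ t in simplex (k+1) s, P ω (k+1) t) = ∫ x, f x := by
    rw [← integral_indicator hmeas]
    exact ((mp.symm e).integral_comp' ((simplex (k+1) s).indicator (P ω (k+1)))).symm
  have hfi : Integrable f volume := by
    rw [hf]
    have : Integrable ((simplex (k+1) s).indicator (P ω (k+1))) volume :=
      (integrable_indicator_iff hmeas).2 hint
    exact ((mp.symm e).integrable_comp_emb e.symm.measurableEmbedding).2 this
  have hfeq : ∀ u y, f (u, y)
      = Set.indicator (Set.Icc (0:ℝ) s)
          (fun u' => (simplex k u').indicator (fun y' => ω u' * P ω k y') y) u := by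
    intro u y
    rw [hf]
    simp only [hsnoc]
    by_cases h : Fin.snoc y u ∈ simplex (k+1) s
    · obtain ⟨hu, hy⟩ := snoc_mem_simplex_iff.1 h
      rw [Set.indicator_of_mem h, Set.indicator_of_mem hu, Set.indicator_of_mem hy, P_snoc]
    · rw [Set.indicator_of_notMem h]
      by_cases hu : u ∈ Set.Icc (0:ℝ) s
      · by_cases hy : y ∈ simplex k u
        · exact absurd (snoc_mem_simplex_iff.2 ⟨hu, hy⟩) h
        · rw [Set.indicator_of_mem hu, Set.indicator_of_notMem hy]
      · rw [Set.indicator_of_notMem hu]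
  have step2 : (∫ x, f x) = ∫ u, ∫ y, f (u, y) := by
    rw [Measure.volume_eq_prod] at hfi ⊢
    exact integral_prod f hfi
  rw [step1, step2]
  have step3 : ∀ u : ℝ, (∫ y, f (u, y))
      = Set.indicator (Set.Icc (0:ℝ) s)
          (fun u' => ∫ y in simplex k u', ω u' * P ω k y) u := by
    intro u
    by_cases hu : u ∈ Set.Icc (0:ℝ) s
    · rw [Set.indicator_of_mem hu, ← integral_indicator (isClosed_simplex k u).measurableSet]
      congr 1
      funext y
      rw [hfeq, Set.indicator_of_mem hu]
    · rw [Set.indicator_of_notMem hu]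
      have : ∀ y, f (u, y) = 0 := fun y => by rw [hfeq, Set.indicator_of_notMem hu]
      simp [this]
  calc (∫ u, ∫ y, f (u, y))
      = ∫ u, Set.indicator (Set.Icc (0:ℝ) s)
          (fun u' => ∫ y in simplex k u', ω u' * P ω k y) u := by
        congr 1; funext u; exact step3 u
    _ = ∫ u in Set.Icc (0:ℝ) s, ∫ y in simplex k u, ω u * P ω k y :=
        integral_indicator measurableSet_Icc
    _ = ∫ u in Set.Icc (0:ℝ) s, ω u * ∫ y in simplex k u, P ω k y := by
        refine setIntegral_congr_fun measurableSet_Icc fun u _ => ?_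
        calc (∫ y in simplex k u, ω u * P ω k y)
            = ∫ y in simplex k u, (ContinuousLinearMap.mul ℝ 𝒜 (ω u)) (P ω k y) := by
              simp [ContinuousLinearMap.mul_apply']
          _ = (ContinuousLinearMap.mul ℝ 𝒜 (ω u)) (∫ y in simplex k u, P ω k y) :=
              ContinuousLinearMap.integral_comp_comm _ (integrableOn_P hω k u)
          _ = ω u * ∫ y in simplex k u, P ω k y := rfl


lemma simplex_zero (s : ℝ) : simplex 0 s = Set.univ := by
  ext t
  simp only [simplex, Set.mem_setOf_eq, Set.mem_univ, iff_true]
  exact ⟨fun i => i.elim0, fun i => i.elim0, fun i => i.elim0⟩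

lemma F_eq_volt (hω : Continuous ω) (k : ℕ) :
    ∀ {s : ℝ}, 0 ≤ s → (∫ t in simplex k s, P ω k t) = volt ω k s := by
  induction k with
  | zero =>
    intro s hs
    rw [simplex_zero, Measure.restrict_univ]
    have hP : ∀ t : Fin 0 → ℝ, P ω 0 t = 1 := fun t => by simp [P]
    have huniv : (volume : Measure (Fin 0 → ℝ)) Set.univ = 1 := by
      simp [MeasureTheory.volume_pi, Measure.pi_univ]
    rw [volt_zero]
    simp only [hP, integral_const, measureReal_def, huniv, ENNReal.toReal_one, one_smul]
  | succ k ih =>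
    intro s hs
    rw [F_succ hω k hs]
    rw [setIntegral_congr_fun measurableSet_Icc
      (fun u hu => by simp only; rw [ih hu.1] : Set.EqOn (fun u => ω u * ∫ y in simplex k u, P ω k y)
        (fun u => ω u * volt ω k u) (Set.Icc 0 s))]
    rw [volt_succ, integral_Icc_eq_integral_Ioc, ← intervalIntegral.integral_of_le hs]

section Ideal
variable (q : ℕ) (I : TwoSidedIdeal 𝒜)

lemma listProd_eq_zero (hI : ∀ f : Fin (q + 1) → 𝒜, (∀ i, f i ∈ I) → (List.ofFn f).prod = 0)
    {l : List 𝒜} (hlen : l.length = q + 1) (hl : ∀ a ∈ l, a ∈ I) : l.prod = 0 := by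
  rw [← List.ofFn_get l, List.ofFn_congr hlen]
  exact hI _ fun i => hl _ (l.get_mem _)

lemma volt_mem (hω : Continuous ω)
    (hI : ∀ f : Fin (q + 1) → 𝒜, (∀ i, f i ∈ I) → (List.ofFn f).prod = 0)
    (hωI : ∀ t, ω t ∈ I) (k : ℕ) :
    ∀ m : ℕ, m + k = q + 1 → ∀ (s : ℝ) (l : List 𝒜),
      l.length = m → (∀ a ∈ l, a ∈ I) → l.prod * volt ω k s = 0 := by
  induction k with
  | zero =>
    intro m hm s l hlen hl
    rw [volt_zero]
    simpa using listProd_eq_zero q I hI (by omega) hl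
  | succ k ih =>
    intro m hm s l hlen hl
    have hc : Continuous fun u => ω u * volt ω k u := hω.mul (continuous_volt hω k)
    have hzero : ∀ u : ℝ, (ContinuousLinearMap.mul ℝ 𝒜 l.prod) (ω u * volt ω k u) = 0 := by
      intro u
      have := ih (m+1) (by omega) u (l ++ [ω u]) (by simp [hlen]) (by
        intro a ha
        rcases List.mem_append.1 ha with h | h
        · exact hl a h
        · simp at h; subst h; exact hωI u)
      simpa [ContinuousLinearMap.mul_apply', List.prod_append, mul_assoc] using this
    calc l.prod * volt ω (k+1) s
        = (ContinuousLinearMap.mul ℝ 𝒜 l.prod) (∫ u in (0:ℝ)..s, ω u * volt ω k u) := by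
          rw [volt_succ]; simp [ContinuousLinearMap.mul_apply']
      _ = ∫ u in (0:ℝ)..s, (ContinuousLinearMap.mul ℝ 𝒜 l.prod) (ω u * volt ω k u) :=
          (ContinuousLinearMap.intervalIntegral_comp_comm _ (hc.intervalIntegrable 0 s)).symm
      _ = 0 := by simp [hzero]

/-- `I` as an `ℝ`-submodule. -/
def Isub : Submodule ℝ 𝒜 where
  carrier := I
  add_mem' := I.add_mem
  zero_mem' := I.zero_mem
  smul_mem' := fun r x hx => by
    rw [Algebra.smul_def]
    exact I.mul_mem_left _ _ hx

lemma intervalIntegral_mem {f : ℝ → 𝒜} {s : ℝ} (hs : 0 ≤ s) (hf : Continuous f)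
    (hmem : ∀ u, f u ∈ I) : (∫ u in (0:ℝ)..s, f u) ∈ (Isub I).topologicalClosure := by
  set J := (Isub (𝒜 := 𝒜) I).topologicalClosure with hJ
  rw [intervalIntegral.integral_of_le hs]
  rcases eq_or_lt_of_le hs with rfl | hs'
  · simp
  set μ := volume.restrict (Set.Ioc (0:ℝ) s) with hμ
  have hvol : μ Set.univ = ENNReal.ofReal s := by
    simp [hμ, Real.volume_Ioc]
  haveI : IsFiniteMeasure μ := ⟨by rw [hvol]; exact ENNReal.ofReal_lt_top⟩
  haveI : NeZero μ := ⟨fun h => by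
    rw [h] at hvol
    simp only [Measure.coe_zero, Pi.zero_apply] at hvol
    exact absurd hvol.symm (by simp [ENNReal.ofReal_eq_zero]; linarith)⟩
  have hfi : Integrable f μ := hf.integrableOn_Ioc
  have havg : (⨍ u, f u ∂μ) ∈ (J : Set 𝒜) := by
    refine Convex.average_mem (J.convex) ?_ ?_ hfi
    · exact Submodule.isClosed_topologicalClosure _
    · exact Filter.Eventually.of_forall fun u => Submodule.le_topologicalClosure _ (hmem u)
  have hne : (μ Set.univ).toReal ≠ 0 := by
    rw [hvol, ENNReal.toReal_ofReal hs]
    exact ne_of_gt hs'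
  have : (∫ u, f u ∂μ) = (μ Set.univ).toReal • ⨍ u, f u ∂μ := by
    rw [average_eq, smul_smul, measureReal_def, mul_inv_cancel₀ hne, one_smul]
  rw [show (∫ u in Set.Ioc (0:ℝ) s, f u) = ∫ u, f u ∂μ from rfl, this]
  exact J.smul_mem _ havg


end Ideal
end VolterraAux

open VolterraAux in
/-- If `𝒜` is a unital Banach algebra, `I ⊆ 𝒜` a two-sided ideal in which every product of
`q+1` elements vanishes, and `ω : ℝ → I ⊆ 𝒜` is continuous, then the truncated Volterra
series `A` satisfies: (i) `A(0) = 1`; (ii) `A'(s) = -ω(s)·A(s)` for `s ∈ [0, ∞)`;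
(iii) `A(s)` is invertible for every `s ≥ 0`. -/
theorem volterra_parallel_transport {𝒜 : Type*} [NormedRing 𝒜] [NormedAlgebra ℝ 𝒜]
    [CompleteSpace 𝒜] (q : ℕ) (I : TwoSidedIdeal 𝒜)
    (hI : ∀ f : Fin (q + 1) → 𝒜, (∀ i, f i ∈ I) → (List.ofFn f).prod = 0)
    (ω : ℝ → 𝒜) (hω : Continuous ω) (hωI : ∀ t, ω t ∈ I) :
    volterra q ω 0 = 1 ∧
      (∀ s : ℝ, 0 ≤ s →
        HasDerivWithinAt (volterra q ω) (-(ω s * volterra q ω s)) (Set.Ici 0) s) ∧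
      ∀ s : ℝ, 0 ≤ s → IsUnit (volterra q ω s) := by
  classical
  set V : ℝ → 𝒜 := fun s => 1 + ∑ k ∈ Finset.Icc 1 q, (-1:ℝ)^k • volt ω k s with hVdef
  have hIcc : ∀ (b : ℕ → 𝒜), ∑ k ∈ Finset.Icc 1 q, b k = ∑ i ∈ Finset.range q, b (1+i) := by
    intro b
    rw [← Finset.Ico_add_one_right_eq_Icc, Finset.sum_Ico_eq_sum_range]
    simp
  have hvolterra_eq : ∀ s : ℝ, 0 ≤ s → volterra q ω s = V s := by
    intro s hs
    unfold volterra
    rw [hVdef]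
    congr 1
    exact Finset.sum_congr rfl fun k _ =>
      congrArg (fun x : 𝒜 => (-1:ℝ)^k • x) (F_eq_volt hω k hs)
  -- (i)
  have hzero_at : ∀ k, volt ω (k+1) (0:ℝ) = 0 := fun k => by
    rw [volt_succ]; simp
  have h0 : volterra q ω 0 = 1 := by
    rw [hvolterra_eq 0 le_rfl, hVdef]
    simp only
    rw [hIcc]
    have : ∀ i ∈ Finset.range q, (-1:ℝ)^(1+i) • volt ω (1+i) (0:ℝ) = 0 := by
      intro i _
      have : volt ω (i+1) (0:ℝ) = 0 := hzero_at i
      rw [Nat.add_comm 1 i] at *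
      rw [this, smul_zero]
    rw [Finset.sum_congr rfl this]
    simp
  -- key vanishing
  have hzero : ∀ s : ℝ, ω s * volt ω q s = 0 := by
    intro s
    have := volt_mem q I hω hI hωI q 1 (by omega) s [ω s] rfl (by simp [hωI])
    simpa using this
  -- (ii)
  have hderiv : ∀ s : ℝ, 0 ≤ s →
      HasDerivWithinAt (volterra q ω) (-(ω s * volterra q ω s)) (Set.Ici 0) s := by
    intro s hs
    have hD : HasDerivAt V (∑ k ∈ Finset.Icc 1 q, (-1:ℝ)^k • (ω s * volt ω (k-1) s)) s := by
      rw [hVdef]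
      apply HasDerivAt.const_add
      apply HasDerivAt.fun_sum
      intro k hk
      obtain ⟨j, rfl⟩ : ∃ j, k = j + 1 := ⟨k - 1, by
        have := (Finset.mem_Icc.1 hk).1; omega⟩
      simpa using (volt_hasDerivAt hω j s).fun_const_smul ((-1:ℝ)^(j+1))
    have h1 : ∀ i : ℕ, (-1:ℝ)^(i+1+1) • (ω s * volt ω (i+1) s)
        = -((-1:ℝ)^(i+1) • (ω s * volt ω (i+1) s)) := fun i => by
      rw [pow_succ, mul_smul, neg_one_smul, smul_neg]
    have hsum : (∑ k ∈ Finset.Icc 1 q, (-1:ℝ)^k • (ω s * volt ω (k-1) s)) = -(ω s * V s) := by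
      have hV' : V s = 1 + ∑ i ∈ Finset.range q, (-1:ℝ)^(i+1) • volt ω (i+1) s := by
        rw [hVdef]
        simp only
        rw [hIcc]
        congr 1
        exact Finset.sum_congr rfl fun i _ => by rw [Nat.add_comm 1 i]
      calc ∑ k ∈ Finset.Icc 1 q, (-1:ℝ)^k • (ω s * volt ω (k-1) s)
          = ∑ i ∈ Finset.range q, (-1:ℝ)^(i+1) • (ω s * volt ω i s) := by
            rw [hIcc]
            exact Finset.sum_congr rfl fun i _ => by rw [Nat.add_comm 1 i]; simp
        _ = ∑ i ∈ Finset.range (q+1), (-1:ℝ)^(i+1) • (ω s * volt ω i s) := by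
            rw [Finset.sum_range_succ, hzero s, smul_zero, add_zero]
        _ = (∑ i ∈ Finset.range q, (-1:ℝ)^(i+1+1) • (ω s * volt ω (i+1) s))
              + (-1:ℝ)^(0+1) • (ω s * volt ω 0 s) := Finset.sum_range_succ' _ _
        _ = (∑ i ∈ Finset.range q, -((-1:ℝ)^(i+1) • (ω s * volt ω (i+1) s))) + -(ω s) := by
            rw [Finset.sum_congr rfl fun i _ => h1 i]
            congr 1
            rw [volt_zero]
            simp
        _ = -(ω s * V s) := by
            rw [hV', mul_add, mul_one, Finset.mul_sum]
            simp only [mul_smul_comm]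
            rw [Finset.sum_neg_distrib]
            abel
    have hDA : HasDerivAt V (-(ω s * V s)) s := hsum ▸ hD
    have hw : HasDerivWithinAt V (-(ω s * V s)) (Set.Ici 0) s := hDA.hasDerivWithinAt
    rw [hvolterra_eq s hs]
    exact hw.congr (fun y hy => hvolterra_eq y hy) (hvolterra_eq s hs)
  -- (iii)
  have hunit : ∀ s : ℝ, 0 ≤ s → IsUnit (volterra q ω s) := by
    intro s hs
    rw [hvolterra_eq s hs, hVdef]
    simp only
    set N : 𝒜 := ∑ k ∈ Finset.Icc 1 q, (-1:ℝ)^k • volt ω k s with hN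
    have hNmem : N ∈ (Isub I).topologicalClosure := by
      rw [hN]
      refine Submodule.sum_mem _ fun k hk => Submodule.smul_mem _ _ ?_
      obtain ⟨j, rfl⟩ : ∃ j, k = j + 1 := ⟨k - 1, by
        have := (Finset.mem_Icc.1 hk).1; omega⟩
      rw [volt_succ]
      exact intervalIntegral_mem I hs (hω.mul (continuous_volt hω j))
        (fun u => I.mul_mem_right _ _ (hωI u))
    have hpow : N ^ (q+1) = 0 := by
      have hsubset : closure ((I : Set 𝒜)) ⊆ {y : 𝒜 | y ^ (q+1) = 0} := by
        refine closure_minimal ?_ (isClosed_eq (continuous_pow _) continuous_const)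
        intro y hy
        have := hI (fun _ => y) (fun _ => hy)
        rw [List.ofFn_const, List.prod_replicate] at this
        exact this
      have hNc : N ∈ closure ((Isub (𝒜 := 𝒜) I : Submodule ℝ 𝒜) : Set 𝒜) := by
        rw [← Submodule.topologicalClosure_coe]
        exact hNmem
      exact hsubset hNc
    exact (IsNilpotent.isUnit_one_add ⟨q+1, hpow⟩)
  exact ⟨h0, hderiv, hunit⟩
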